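/- Let $\Lambda \subset \mathbb{R}^2$ be an infinite sector of opening angle $\theta \in (0, \pi)$. Then for every $\varepsilon > 0$ and every $v \in W^{1,2}(\Lambda)$: $\int_{\partial\Lambda} |v|^2\, d\sigma \leq \varepsilon \int_\Lambda |\nabla v|^2\, dx + \frac{C_\theta}{\varepsilon} \int_\Lambda |v|^2\, dx$ with $C_\theta = \frac{2}{1 - \cos\theta}$. -/

import Mathlib

open MeasureTheory Set Filter Topology

lemma limit_zero {F : ℝ → ℝ} {L : ℝ}
    (hnn : ∀ t, 0 ≤ F t) (hInt : IntegrableOn F (Ioi 0))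
    (hT : Tendsto F atTop (𝓝 L)) : L = 0 := by
  by_contra hL
  have hL0 : 0 ≤ L := ge_of_tendsto' hT hnn
  have hpos : 0 < L := hL0.lt_of_ne (Ne.symm hL)
  have hev : ∀ᶠ T in atTop, L/2 ≤ F T := hT.eventually (eventually_ge_nhds (by linarith))
  obtain ⟨T₀, hT₀⟩ := eventually_atTop.1 hev
  have hsub : Ioi (max T₀ 0) ⊆ Ioi 0 := Ioi_subset_Ioi (le_max_right _ _)
  have hic : IntegrableOn (fun _ => L/2 : ℝ → ℝ) (Ioi (max T₀ 0)) := by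
    refine Integrable.mono' (hInt.mono_set hsub) aestronglyMeasurable_const ?_
    refine (ae_restrict_iff' measurableSet_Ioi).2 (ae_of_all _ fun t ht => ?_)
    have h1 : T₀ ≤ t := le_of_lt (lt_of_le_of_lt (le_max_left _ _) ht)
    have h2 := hT₀ t h1
    rw [Real.norm_eq_abs, abs_of_nonneg (by linarith)]
    exact h2
  rw [integrableOn_const_iff] at hic
  rcases hic with h | h
  · simp at h; linarith
  · rw [Real.volume_Ioi] at h; exact lt_irrefl _ h

lemma oneD {f f' : ℝ → ℝ} {b : ℝ} (hb : 0 < b)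
    (hc : ContinuousWithinAt f (Ici 0) 0)
    (hd : ∀ t ∈ Ioi (0:ℝ), HasDerivAt f (f' t) t)
    (hm : AEStronglyMeasurable f' (volume.restrict (Ioi (0:ℝ))))
    (hf2 : IntegrableOn (fun t => f t ^ 2) (Ioi 0))
    (hf'2 : IntegrableOn (fun t => f' t ^ 2) (Ioi 0)) :
    f 0 ^ 2 ≤ ∫ t in Ioi (0:ℝ), (b * f' t ^ 2 + f t ^ 2 / b) := by
  have hfm : AEStronglyMeasurable f (volume.restrict (Ioi (0:ℝ))) := by
    refine ContinuousOn.aestronglyMeasurable (fun t ht => ?_) measurableSet_Ioi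
    exact (hd t ht).continuousAt.continuousWithinAt
  have hGint : IntegrableOn (fun t => b * f' t ^ 2 + f t ^ 2 / b) (Ioi 0) :=
    (hf'2.const_mul b).add (hf2.div_const b)
  have key : ∀ t, |2 * (f t * f' t)| ≤ b * f' t ^ 2 + f t ^ 2 / b := by
    intro t
    have e1 : b * f' t ^ 2 + f t ^ 2 / b - 2 * (f t * f' t) = (b * f' t - f t)^2 / b := by
      field_simp; ring
    have e2 : b * f' t ^ 2 + f t ^ 2 / b + 2 * (f t * f' t) = (b * f' t + f t)^2 / b := by
      field_simp; ring
    have p1 : 0 ≤ (b * f' t - f t)^2 / b := div_nonneg (sq_nonneg _) hb.le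
    have p2 : 0 ≤ (b * f' t + f t)^2 / b := div_nonneg (sq_nonneg _) hb.le
    refine abs_le.2 ⟨by linarith, by linarith⟩
  have hF'int : IntegrableOn (fun t => 2 * (f t * f' t)) (Ioi 0) :=
    Integrable.mono' hGint ((hfm.mul hm).const_mul 2) (ae_of_all _ key)
  have hderiv' : ∀ t ∈ Ioi (0:ℝ), HasDerivAt (fun t => f t ^ 2) (2 * (f t * f' t)) t := by
    intro t ht
    have := (hd t ht).fun_pow 2
    simpa [pow_one, mul_assoc, mul_comm, mul_left_comm] using this
  have hIoi1 : IntegrableOn (fun t => 2 * (f t * f' t)) (Ioi 1) :=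
    hF'int.mono_set (Ioi_subset_Ioi zero_le_one)
  have htends : Tendsto (fun T => ∫ t in (1:ℝ)..T, 2 * (f t * f' t)) atTop
      (𝓝 (∫ t in Ioi 1, 2 * (f t * f' t))) :=
    intervalIntegral_tendsto_integral_Ioi 1 hIoi1 tendsto_id
  have hFT : ∀ᶠ T in atTop, ∫ t in (1:ℝ)..T, 2 * (f t * f' t) = f T ^ 2 - f 1 ^ 2 := by
    filter_upwards [eventually_ge_atTop (1:ℝ)] with T hT
    refine intervalIntegral.integral_eq_sub_of_hasDerivAt (f := fun t => f t ^ 2)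
      (f' := fun t => 2 * (f t * f' t)) (fun t ht => ?_) ?_
    · rw [uIcc_of_le hT] at ht
      exact hderiv' t (lt_of_lt_of_le one_pos ht.1)
    · refine (hF'int.mono_set ?_).intervalIntegrable
      rw [uIcc_of_le hT]
      intro t ht; exact lt_of_lt_of_le one_pos ht.1
  have h2 : Tendsto (fun T => f T ^ 2) atTop
      (𝓝 ((∫ t in Ioi 1, 2 * (f t * f' t)) + f 1 ^ 2)) := by
    have := htends.add (tendsto_const_nhds (α := ℝ) (f := atTop) (x := f 1 ^ 2))
    refine this.congr' ?_
    filter_upwards [hFT] with T h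
    rw [h]; ring
  have hL0 : (∫ t in Ioi 1, 2 * (f t * f' t)) + f 1 ^ 2 = 0 :=
    limit_zero (fun t => sq_nonneg _) hf2 h2
  rw [hL0] at h2
  have hmain := integral_Ioi_of_hasDerivAt_of_tendsto (a := 0) (m := 0)
    (hc.pow 2) hderiv' hF'int h2
  have hf0 : f 0 ^ 2 = - ∫ t in Ioi (0:ℝ), 2 * (f t * f' t) := by
    rw [hmain, Pi.pow_apply]; ring
  rw [hf0, ← integral_neg]
  refine integral_mono hF'int.neg hGint fun t => ?_
  simp only [Pi.neg_apply]
  linarith [(abs_le.1 (key t)).1]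


lemma mem_sector_iff {θ : ℝ} (hθ : θ ∈ Ioo 0 Real.pi) (p : ℝ × ℝ) :
    (∃ r φ : ℝ, 0 < r ∧ φ ∈ Ioo 0 θ ∧ p = (r * Real.cos φ, r * Real.sin φ)) ↔
    (0 < p.2 ∧ 0 < p.1 * Real.sin θ - p.2 * Real.cos θ) := by
  obtain ⟨hθ0, hθπ⟩ := hθ
  constructor
  · rintro ⟨r, φ, hr, ⟨hφ0, hφθ⟩, rfl⟩
    constructor
    · exact mul_pos hr (Real.sin_pos_of_pos_of_lt_pi hφ0 (hφθ.trans hθπ))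
    · have : r * Real.cos φ * Real.sin θ - r * Real.sin φ * Real.cos θ
          = r * Real.sin (θ - φ) := by rw [Real.sin_sub]; ring
      rw [this]
      exact mul_pos hr (Real.sin_pos_of_pos_of_lt_pi (by linarith) (by linarith))
  · rintro ⟨h2, hL⟩
    set r : ℝ := Real.sqrt (p.1^2 + p.2^2) with hr
    have hp2sq : 0 < p.2^2 := pow_pos h2 2
    have hrpos : 0 < r := Real.sqrt_pos.2 (by positivity)
    have hp1r : |p.1| < r := by
      rw [hr]
      have : |p.1| = Real.sqrt (p.1^2) := (Real.sqrt_sq_eq_abs p.1).symm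
      rw [this]
      exact Real.sqrt_lt_sqrt (sq_nonneg _) (by linarith)
    have hdiv1 : p.1 / r < 1 := (div_lt_one hrpos).2 (lt_of_le_of_lt (le_abs_self _) hp1r)
    have hdiv2 : -1 < p.1 / r := by
      rw [lt_div_iff₀ hrpos]
      have := neg_abs_le p.1
      nlinarith [abs_nonneg p.1]
    set φ : ℝ := Real.arccos (p.1 / r) with hφ
    have hφ0 : 0 < φ := Real.arccos_pos.2 hdiv1
    have hφπ : φ < Real.pi := by
      refine lt_of_le_of_ne (Real.arccos_le_pi _) fun h => ?_
      have := Real.arccos_eq_pi.1 h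
      linarith
    have hcos : Real.cos φ = p.1 / r := Real.cos_arccos (by linarith) (by linarith)
    have hsin : Real.sin φ = p.2 / r := by
      rw [hφ, Real.sin_arccos]
      have h1 : 1 - (p.1/r)^2 = (p.2/r)^2 := by
        have hrsq : r^2 = p.1^2 + p.2^2 := Real.sq_sqrt (by positivity)
        field_simp
        linarith
      rw [h1, Real.sqrt_sq (by positivity)]
    have hrc : r * Real.cos φ = p.1 := by rw [hcos]; field_simp
    have hrs : r * Real.sin φ = p.2 := by rw [hsin]; field_simp
    have hsinpos : 0 < Real.sin (θ - φ) := by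
      have : r * Real.sin (θ - φ) = p.1 * Real.sin θ - p.2 * Real.cos θ := by
        rw [Real.sin_sub, ← hrc, ← hrs]; ring
      nlinarith
    have hφθ : φ < θ := by
      by_contra hcon
      push_neg at hcon
      have h1 : θ - φ ≤ 0 := by linarith
      have h2' : -Real.pi ≤ θ - φ := by linarith
      have := Real.sin_nonpos_of_nonpos_of_neg_pi_le h1 h2'
      linarith
    refine ⟨r, φ, hrpos, ⟨hφ0, hφθ⟩, ?_⟩
    rw [hrc, hrs]


noncomputable def M2 (a b c d : ℝ) : (ℝ × ℝ) →L[ℝ] (ℝ × ℝ) :=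
  LinearMap.toContinuousLinearMap
    (Matrix.toLin (Module.Basis.finTwoProd ℝ) (Module.Basis.finTwoProd ℝ) !![a, b; c, d])

lemma M2_apply (a b c d : ℝ) (p : ℝ × ℝ) :
    M2 a b c d p = (a * p.1 + b * p.2, c * p.1 + d * p.2) := by
  simp [M2, Matrix.toLin_finTwoProd_apply]

lemma M2_det (a b c d : ℝ) : (M2 a b c d).det = a * d - b * c := by
  have : (M2 a b c d).det
      = LinearMap.det (Matrix.toLin (Module.Basis.finTwoProd ℝ) (Module.Basis.finTwoProd ℝ) !![a, b; c, d]) := rfl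
  rw [this, LinearMap.det_toLin, Matrix.det_fin_two_of]

lemma M2_hasFDerivAt (a b c d : ℝ) (x : ℝ × ℝ) :
    HasFDerivAt (fun p : ℝ × ℝ => (a * p.1 + b * p.2, c * p.1 + d * p.2))
      (M2 a b c d) x := by
  have h := (M2 a b c d).hasFDerivAt (x := x)
  have he : ⇑(M2 a b c d) = fun p : ℝ × ℝ => (a * p.1 + b * p.2, c * p.1 + d * p.2) :=
    funext (M2_apply a b c d)
  rwa [he] at h

lemma T2_inj {a b c d : ℝ} (h : a * d - b * c ≠ 0) :
    Function.Injective (fun p : ℝ × ℝ => (a * p.1 + b * p.2, c * p.1 + d * p.2)) := by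
  intro p q h'
  have h1 : a * p.1 + b * p.2 = a * q.1 + b * q.2 := congrArg Prod.fst h'
  have h2 : c * p.1 + d * p.2 = c * q.1 + d * q.2 := congrArg Prod.snd h'
  have e1 : (a * d - b * c) * p.1 = (a * d - b * c) * q.1 := by linear_combination d * h1 - b * h2
  have e2 : (a * d - b * c) * p.2 = (a * d - b * c) * q.2 := by linear_combination a * h2 - c * h1
  exact Prod.ext (mul_left_cancel₀ h e1) (mul_left_cancel₀ h e2)

lemma cov (a b c d : ℝ) (h : a * d - b * c ≠ 0) (g : ℝ × ℝ → ℝ) {Q : Set (ℝ × ℝ)}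
    (hQ : MeasurableSet Q) :
    ∫ x in (fun p : ℝ × ℝ => (a * p.1 + b * p.2, c * p.1 + d * p.2)) '' Q, g x
      = ∫ p in Q, |a * d - b * c| * g (a * p.1 + b * p.2, c * p.1 + d * p.2) := by
  have := integral_image_eq_integral_abs_det_fderiv_smul volume hQ
    (fun x _ => (M2_hasFDerivAt a b c d x).hasFDerivWithinAt) ((T2_inj h).injOn) g
  simpa [M2_det, smul_eq_mul] using this

lemma cov_int (a b c d : ℝ) (h : a * d - b * c ≠ 0) (g : ℝ × ℝ → ℝ) {Q : Set (ℝ × ℝ)}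
    (hQ : MeasurableSet Q)
    (hg : IntegrableOn g ((fun p : ℝ × ℝ => (a * p.1 + b * p.2, c * p.1 + d * p.2)) '' Q)) :
    IntegrableOn (fun p : ℝ × ℝ => g (a * p.1 + b * p.2, c * p.1 + d * p.2)) Q := by
  have hiff := integrableOn_image_iff_integrableOn_abs_det_fderiv_smul volume hQ
    (fun x _ => (M2_hasFDerivAt a b c d x).hasFDerivWithinAt) ((T2_inj h).injOn) g
  rw [hiff] at hg
  have h2 := hg.const_mul |a * d - b * c|⁻¹
  have habs : |a * d - b * c| ≠ 0 := abs_ne_zero.2 h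
  refine h2.congr (ae_of_all _ fun p => ?_)
  simp only [M2_det, smul_eq_mul]
  field_simp

lemma ray_est (v : ℝ × ℝ → ℝ) (Λ : Set (ℝ × ℝ))
    (hvc : ContinuousOn v (closure Λ)) (hvd : ∀ x ∈ Λ, DifferentiableAt ℝ v x)
    {b : ℝ} (hb : 0 < b) (n : ℝ × ℝ) (a c : ℝ)
    (hdet : a * n.2 - n.1 * c ≠ 0)
    {S : Set (ℝ × ℝ)} (hSΛ : S ⊆ Λ)
    (himg : (fun p : ℝ × ℝ => (a * p.1 + n.1 * p.2, c * p.1 + n.2 * p.2)) ''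
      (Ioi (0:ℝ) ×ˢ Ioi (0:ℝ)) = S)
    (hv2 : IntegrableOn (fun x => (v x) ^ 2) S)
    (hD2 : IntegrableOn (fun x => (fderiv ℝ v x n) ^ 2) S) :
    ∫ s in Ioi (0:ℝ), (v (a * s, c * s)) ^ 2
      ≤ |a * n.2 - n.1 * c|⁻¹ * ∫ x in S, (b * (fderiv ℝ v x n) ^ 2 + (v x) ^ 2 / b) := by
  set T : ℝ × ℝ → ℝ × ℝ := fun p => (a * p.1 + n.1 * p.2, c * p.1 + n.2 * p.2) with hT
  set Q : Set (ℝ × ℝ) := Ioi (0:ℝ) ×ˢ Ioi (0:ℝ) with hQdef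
  have hQ : MeasurableSet Q := measurableSet_Ioi.prod measurableSet_Ioi
  set g : ℝ × ℝ → ℝ := fun x => b * (fderiv ℝ v x n) ^ 2 + (v x) ^ 2 / b with hg
  have hgS : IntegrableOn g S := (hD2.const_mul b).add (hv2.div_const b)
  have hTmem : ∀ s t : ℝ, 0 < s → 0 < t → T (s, t) ∈ Λ := by
    intro s t hs ht
    apply hSΛ
    rw [← himg]
    exact ⟨(s, t), ⟨hs, ht⟩, rfl⟩
  have hTcont : Continuous T := by fun_prop
  have hray : ∀ s : ℝ, 0 < s → (a * s, c * s) ∈ closure Λ := by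
    intro s hs
    have h0 : T (s, 0) = (a * s, c * s) := by simp [hT]
    have hlc : Continuous (fun t : ℝ => T (s, t)) := by fun_prop
    have htend : Tendsto (fun t => T (s, t)) (𝓝[>] (0:ℝ)) (𝓝 (a * s, c * s)) := by
      rw [← h0]
      exact (hlc.tendsto 0).mono_left nhdsWithin_le_nhds
    refine mem_closure_of_tendsto htend ?_
    exact eventually_mem_nhdsWithin.mono fun t ht => hTmem s t hs ht
  -- pullback integrabilities
  have hgimg : IntegrableOn g (T '' Q) := by rw [himg]; exact hgS
  have PG : IntegrableOn (fun p : ℝ × ℝ => g (T p)) Q := cov_int a n.1 c n.2 hdet g hQ hgimg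
  have P2 : IntegrableOn (fun p : ℝ × ℝ => (v (T p)) ^ 2) Q := by
    refine cov_int a n.1 c n.2 hdet (fun x => (v x)^2) hQ ?_
    rw [himg]; exact hv2
  have PD : IntegrableOn (fun p : ℝ × ℝ => (fderiv ℝ v (T p) n) ^ 2) Q := by
    refine cov_int a n.1 c n.2 hdet (fun x => (fderiv ℝ v x n)^2) hQ ?_
    rw [himg]; exact hD2
  have hQr : (volume : Measure (ℝ × ℝ)).restrict Q
      = (volume.restrict (Ioi 0)).prod (volume.restrict (Ioi 0)) :=
    (Measure.prod_restrict _ _).symm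
  rw [IntegrableOn, hQr] at PG P2 PD
  have h2ae := P2.prod_right_ae
  have hDae := PD.prod_right_ae
  have ΦInt : Integrable (fun s => ∫ t in Ioi (0:ℝ), g (T (s, t)))
      (volume.restrict (Ioi (0:ℝ))) := PG.integral_prod_left
  have hbound : ∀ᵐ s ∂(volume.restrict (Ioi (0:ℝ))),
      (v (a * s, c * s)) ^ 2 ≤ ∫ t in Ioi (0:ℝ), g (T (s, t)) := by
    filter_upwards [h2ae, hDae, (ae_restrict_iff' measurableSet_Ioi).2
      (ae_of_all _ fun s (hs : s ∈ Ioi (0:ℝ)) => hs)] with s hv2s hDs hs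
    have h0 : T (s, 0) = (a * s, c * s) := by simp [hT]
    have hline : ∀ t : ℝ, HasDerivAt (fun t => T (s, t)) (n.1, n.2) t := by
      intro t
      have h1 : HasDerivAt (fun t : ℝ => a * s + n.1 * t) n.1 t := by
        simpa using ((hasDerivAt_id t).const_mul n.1).const_add (a * s)
      have h2 : HasDerivAt (fun t : ℝ => c * s + n.2 * t) n.2 t := by
        simpa using ((hasDerivAt_id t).const_mul n.2).const_add (c * s)
      exact h1.prodMk h2
    have hlc : Continuous (fun t : ℝ => T (s, t)) := by fun_prop
    have key := oneD (f := fun t => v (T (s, t)))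
      (f' := fun t => fderiv ℝ v (T (s, t)) n) hb ?_ ?_ ?_ hv2s hDs
    · have key' : v (T (s, 0)) ^ 2 ≤ ∫ t in Ioi (0:ℝ),
          (b * (fderiv ℝ v (T (s, t)) n) ^ 2 + (v (T (s, t))) ^ 2 / b) := by
        simpa using key
      rw [h0] at key'
      exact key'
    · -- continuity within Ici 0 at 0
      have hmaps : MapsTo (fun t => T (s, t)) (Ici 0) (closure Λ) := by
        intro t ht
        rcases eq_or_lt_of_le (mem_Ici.mp ht) with h | h
        · show T (s, t) ∈ closure Λ
          rw [← h, h0]; exact hray s hs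
        · exact subset_closure (hTmem s t hs h)
      have hcv : ContinuousWithinAt v (closure Λ) (T (s, 0)) := by
        rw [h0]; exact hvc _ (hray s hs)
      exact ContinuousWithinAt.comp (g := v) (f := fun t : ℝ => T (s, t)) (x := (0:ℝ))
        (s := Ici 0) (t := closure Λ) hcv hlc.continuousWithinAt hmaps
    · intro t ht
      have hd := (hvd _ (hTmem s t hs ht)).hasFDerivAt.comp_hasDerivAt t (hline t)
      exact hd
    · exact ((measurable_fderiv_apply_const ℝ v n).comp
        hlc.measurable).aestronglyMeasurable
  have ILeft : Integrable (fun s => (v (a * s, c * s)) ^ 2) (volume.restrict (Ioi (0:ℝ))) := by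
    have hcont : ContinuousOn (fun s : ℝ => (v (a * s, c * s)) ^ 2) (Ioi 0) := by
      have h1 : ContinuousOn (fun s : ℝ => v (a * s, c * s)) (Ioi 0) := by
        refine hvc.comp ?_ ?_
        · exact ((continuous_const.mul continuous_id).prodMk
            (continuous_const.mul continuous_id)).continuousOn
        · intro s hs; exact hray s hs
      exact h1.pow 2
    refine Integrable.mono' ΦInt (hcont.aestronglyMeasurable measurableSet_Ioi) ?_
    filter_upwards [hbound] with s h
    rw [Real.norm_eq_abs, abs_of_nonneg (sq_nonneg _)]
    exact h
  have hstep := integral_mono_ae ILeft ΦInt hbound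
  -- identify the iterated integral
  have hiter : ∫ s in Ioi (0:ℝ), ∫ t in Ioi (0:ℝ), g (T (s, t)) = ∫ p in Q, g (T p) := by
    rw [show (∫ p in Q, g (T p)) = ∫ p, g (T p) ∂((volume : Measure (ℝ×ℝ)).restrict Q) from rfl,
      hQr]
    exact (integral_prod _ PG).symm
  have hcov := cov a n.1 c n.2 hdet g hQ
  have himg' : (fun p : ℝ × ℝ => (a * p.1 + n.1 * p.2, c * p.1 + n.2 * p.2)) '' Q = S := himg
  rw [himg'] at hcov
  -- hcov : ∫ x in S, g x = ∫ p in Q, |det| * g (T p)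
  have habs : (0:ℝ) < |a * n.2 - n.1 * c| := abs_pos.2 hdet
  have hconst : ∫ p in Q, |a * n.2 - n.1 * c| * g (T p)
      = |a * n.2 - n.1 * c| * ∫ p in Q, g (T p) := integral_const_mul _ _
  calc ∫ s in Ioi (0:ℝ), (v (a * s, c * s)) ^ 2
      ≤ ∫ s in Ioi (0:ℝ), ∫ t in Ioi (0:ℝ), g (T (s, t)) := hstep
    _ = ∫ p in Q, g (T p) := hiter
    _ = |a * n.2 - n.1 * c|⁻¹ * ∫ x in S, g x := by
        rw [hcov, hconst, ← mul_assoc, inv_mul_cancel₀ (ne_of_gt habs), one_mul]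

theorem stmt5 (θ : ℝ) (hθ : θ ∈ Ioo 0 Real.pi)
    (Λ : Set (ℝ × ℝ))
    (hΛ : Λ = {x : ℝ × ℝ | ∃ r φ : ℝ, 0 < r ∧ φ ∈ Ioo 0 θ ∧
        x = (r * Real.cos φ, r * Real.sin φ)})
    (ε : ℝ) (hε : 0 < ε) (v : ℝ × ℝ → ℝ)
    (hvc : ContinuousOn v (closure Λ))
    (hvd : ∀ x ∈ Λ, DifferentiableAt ℝ v x)
    (hv2 : MemLp v 2 (volume.restrict Λ))
    (hg2 : IntegrableOn
      (fun x => (fderiv ℝ v x (1, 0)) ^ 2 + (fderiv ℝ v x (0, 1)) ^ 2) Λ) :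
    (∫ r in Ioi (0:ℝ), (v (r, 0)) ^ 2)
      + (∫ r in Ioi (0:ℝ), (v (r * Real.cos θ, r * Real.sin θ)) ^ 2)
    ≤ ε * (∫ x in Λ, ((fderiv ℝ v x (1, 0)) ^ 2 + (fderiv ℝ v x (0, 1)) ^ 2))
      + ((2 / (1 - Real.cos θ)) / ε) * ∫ x in Λ, (v x) ^ 2 := by
  obtain ⟨hθ0, hθπ⟩ := hθ
  have hπ := Real.pi_pos
  set s' : ℝ := Real.sin (θ/2) with hs'def
  set c' : ℝ := Real.cos (θ/2) with hc'def
  have hs' : 0 < s' := Real.sin_pos_of_pos_of_lt_pi (by linarith) (by linarith)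
  have hc' : 0 < c' := Real.cos_pos_of_mem_Ioo ⟨by linarith, by linarith⟩
  have hpy : s' ^ 2 + c' ^ 2 = 1 := Real.sin_sq_add_cos_sq _
  have h2 : (2:ℝ) * (θ/2) = θ := by ring
  have hsin : Real.sin θ = 2 * s' * c' := by rw [← h2, Real.sin_two_mul]
  have hcos : Real.cos θ = 1 - 2 * s' ^ 2 := by
    have h3 := Real.sin_sq_eq_half_sub (θ/2)
    rw [h2] at h3; linarith
  -- characterization of Λ
  have hΛeq : Λ = {p : ℝ × ℝ | 0 < p.2 ∧ 0 < p.1 * Real.sin θ - p.2 * Real.cos θ} := by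
    rw [hΛ]; ext p; exact mem_sector_iff ⟨hθ0, hθπ⟩ p
  -- the two sub-sectors
  set S₁ : Set (ℝ × ℝ) := {p : ℝ × ℝ | 0 < p.2 ∧ 0 < p.1 * s' - p.2 * c'} with hS₁def
  set S₂ : Set (ℝ × ℝ) :=
    {p : ℝ × ℝ | 0 < p.2 * c' - p.1 * s' ∧ 0 < p.1 * Real.sin θ - p.2 * Real.cos θ} with hS₂def
  have hS₁meas : MeasurableSet S₁ := by
    rw [hS₁def, setOf_and]
    exact (measurableSet_lt measurable_const measurable_snd).inter
      (measurableSet_lt measurable_const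
        ((measurable_fst.mul_const s').sub (measurable_snd.mul_const c')))
  have hS₂meas : MeasurableSet S₂ := by
    rw [hS₂def, setOf_and]
    exact (measurableSet_lt measurable_const
        ((measurable_snd.mul_const c').sub (measurable_fst.mul_const s'))).inter
      (measurableSet_lt measurable_const
        ((measurable_fst.mul_const (Real.sin θ)).sub (measurable_snd.mul_const (Real.cos θ))))
  have hS₁Λ : S₁ ⊆ Λ := by
    rw [hΛeq]
    rintro p ⟨h1, h2'⟩
    refine ⟨h1, ?_⟩
    rw [hsin, hcos]
    nlinarith [mul_pos hc' h2']
  have hS₂Λ : S₂ ⊆ Λ := by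
    rw [hΛeq]
    rintro p ⟨h1, h2'⟩
    refine ⟨?_, h2'⟩
    rw [hsin, hcos] at h2'
    nlinarith [mul_pos hs' h2', mul_pos (mul_pos hs' hc') h1, sq_nonneg s', hs', hc']
  have hdisj : Disjoint S₁ S₂ := by
    rw [Set.disjoint_left]
    rintro p ⟨_, h2'⟩ ⟨h3, _⟩
    linarith
  -- images
  have himg1 : (fun p : ℝ × ℝ => (1 * p.1 + c' * p.2, 0 * p.1 + s' * p.2)) ''
      (Ioi (0:ℝ) ×ˢ Ioi (0:ℝ)) = S₁ := by
    ext x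
    constructor
    · rintro ⟨⟨s, t⟩, ⟨hs, ht⟩, rfl⟩
      constructor
      · show (0:ℝ) < 0 * s + s' * t
        nlinarith [mul_pos hs' ht]
      · show (0:ℝ) < (1 * s + c' * t) * s' - (0 * s + s' * t) * c'
        nlinarith [mul_pos hs hs']
    · rintro ⟨h1, h2'⟩
      refine ⟨((x.1 * s' - x.2 * c') / s', x.2 / s'), ⟨div_pos h2' hs', div_pos h1 hs'⟩, ?_⟩
      refine Prod.ext ?_ ?_
      · show 1 * ((x.1 * s' - x.2 * c') / s') + c' * (x.2 / s') = x.1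
        first | (field_simp; ring) | field_simp
      · show 0 * ((x.1 * s' - x.2 * c') / s') + s' * (x.2 / s') = x.2
        first | (field_simp; ring) | field_simp
  have himg2 : (fun p : ℝ × ℝ =>
      (Real.cos θ * p.1 + c' * p.2, Real.sin θ * p.1 + s' * p.2)) ''
      (Ioi (0:ℝ) ×ˢ Ioi (0:ℝ)) = S₂ := by
    ext x
    constructor
    · rintro ⟨⟨s, t⟩, ⟨hs, ht⟩, rfl⟩
      constructor
      · show (0:ℝ) < (Real.sin θ * s + s' * t) * c' - (Real.cos θ * s + c' * t) * s'
        have he : (Real.sin θ * s + s' * t) * c' - (Real.cos θ * s + c' * t) * s' = s * s' := by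
          rw [hsin, hcos]; linear_combination (2 * s * s') * hpy
        rw [he]; exact mul_pos hs hs'
      · show (0:ℝ) < (Real.cos θ * s + c' * t) * Real.sin θ
            - (Real.sin θ * s + s' * t) * Real.cos θ
        have he : (Real.cos θ * s + c' * t) * Real.sin θ
            - (Real.sin θ * s + s' * t) * Real.cos θ = t * s' := by
          rw [hsin, hcos]; linear_combination (2 * t * s') * hpy
        rw [he]; exact mul_pos ht hs'
    · rintro ⟨h1, h2'⟩
      refine ⟨((x.2 * c' - x.1 * s') / s', (x.1 * Real.sin θ - x.2 * Real.cos θ) / s'),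
        ⟨div_pos h1 hs', div_pos h2' hs'⟩, ?_⟩
      refine Prod.ext ?_ ?_
      · show Real.cos θ * ((x.2 * c' - x.1 * s') / s')
            + c' * ((x.1 * Real.sin θ - x.2 * Real.cos θ) / s') = x.1
        rw [hsin, hcos]
        field_simp
        linear_combination (2 * x.1 * s') * hpy
      · show Real.sin θ * ((x.2 * c' - x.1 * s') / s')
            + s' * ((x.1 * Real.sin θ - x.2 * Real.cos θ) / s') = x.2
        rw [hsin, hcos]
        field_simp
        linear_combination (2 * x.2) * hpy
  -- integrand facts
  set n : ℝ × ℝ := (c', s') with hndef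
  have hDn : ∀ x, (fderiv ℝ v x n) ^ 2
      ≤ (fderiv ℝ v x (1, 0)) ^ 2 + (fderiv ℝ v x (0, 1)) ^ 2 := by
    intro x
    have hsplit : n = c' • ((1:ℝ), (0:ℝ)) + s' • ((0:ℝ), (1:ℝ)) := by
      simp [hndef, Prod.ext_iff]
    rw [hsplit, map_add, ContinuousLinearMap.map_smul, ContinuousLinearMap.map_smul,
      smul_eq_mul, smul_eq_mul]
    set A := fderiv ℝ v x (1, 0)
    set B := fderiv ℝ v x (0, 1)
    have h1 : A ^ 2 + B ^ 2 = (s' ^ 2 + c' ^ 2) * (A ^ 2 + B ^ 2) := by rw [hpy]; ring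
    rw [h1]
    nlinarith [sq_nonneg (s' * A - c' * B)]
  have hv2Λ : IntegrableOn (fun x => (v x) ^ 2) Λ := hv2.integrable_sq
  have hDnint : IntegrableOn (fun x => (fderiv ℝ v x n) ^ 2) Λ := by
    refine Integrable.mono' hg2 ?_ (ae_of_all _ fun x => ?_)
    · exact ((measurable_fderiv_apply_const ℝ v n).pow_const 2).aestronglyMeasurable
    · rw [Real.norm_eq_abs, abs_of_nonneg (sq_nonneg _)]
      exact hDn x
  set b : ℝ := ε * s' with hbdef
  have hb : 0 < b := mul_pos hε hs'
  -- apply the ray estimates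
  have hdet1 : 1 * n.2 - n.1 * 0 ≠ 0 := by simp [hndef]; exact hs'.ne'
  have ray1 := ray_est v Λ hvc hvd hb n 1 0 hdet1 hS₁Λ himg1
    (hv2Λ.mono_set hS₁Λ) (hDnint.mono_set hS₁Λ)
  have hdet2 : Real.cos θ * n.2 - n.1 * Real.sin θ ≠ 0 := by
    have : Real.cos θ * n.2 - n.1 * Real.sin θ = -s' := by
      simp only [hndef]
      rw [hsin, hcos]; linear_combination (-2 * s') * hpy
    rw [this]; exact neg_ne_zero.2 hs'.ne'
  have ray2 := ray_est v Λ hvc hvd hb n (Real.cos θ) (Real.sin θ) hdet2 hS₂Λ himg2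
    (hv2Λ.mono_set hS₂Λ) (hDnint.mono_set hS₂Λ)
  -- clean up the determinant factors
  have habs1 : |1 * n.2 - n.1 * 0| = s' := by
    simp [hndef, abs_of_pos hs']
  have hdet2eq : Real.cos θ * n.2 - n.1 * Real.sin θ = -s' := by
    simp only [hndef]
    rw [hsin, hcos]; linear_combination (-2 * s') * hpy
  have habs2 : |Real.cos θ * n.2 - n.1 * Real.sin θ| = s' := by
    rw [hdet2eq, abs_neg, abs_of_pos hs']
  rw [habs1] at ray1
  rw [habs2] at ray2
  -- rewrite the left-hand sides
  have hL1 : (∫ r in Ioi (0:ℝ), (v (r, 0)) ^ 2)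
      = ∫ s in Ioi (0:ℝ), (v (1 * s, 0 * s)) ^ 2 := by
    refine integral_congr_ae (ae_of_all _ fun s => ?_)
    show (v (s, 0)) ^ 2 = (v (1 * s, 0 * s)) ^ 2
    norm_num
  have hL2 : (∫ r in Ioi (0:ℝ), (v (r * Real.cos θ, r * Real.sin θ)) ^ 2)
      = ∫ s in Ioi (0:ℝ), (v (Real.cos θ * s, Real.sin θ * s)) ^ 2 := by
    refine integral_congr_ae (ae_of_all _ fun s => ?_)
    show (v (s * Real.cos θ, s * Real.sin θ)) ^ 2 = (v (Real.cos θ * s, Real.sin θ * s)) ^ 2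
    rw [mul_comm s (Real.cos θ), mul_comm s (Real.sin θ)]
  set g : ℝ × ℝ → ℝ := fun x => b * (fderiv ℝ v x n) ^ 2 + (v x) ^ 2 / b with hgdef
  have hgΛ : IntegrableOn g Λ := (hDnint.const_mul b).add (hv2Λ.div_const b)
  have hgnn : ∀ x, 0 ≤ g x := fun x => by
    have h1 : 0 ≤ b * (fderiv ℝ v x n) ^ 2 := mul_nonneg hb.le (sq_nonneg _)
    have h2' : 0 ≤ (v x) ^ 2 / b := div_nonneg (sq_nonneg _) hb.le
    simpa [hgdef] using add_nonneg h1 h2'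
  have hunion : ∫ x in S₁ ∪ S₂, g x = (∫ x in S₁, g x) + ∫ x in S₂, g x :=
    setIntegral_union hdisj hS₂meas (hgΛ.mono_set hS₁Λ) (hgΛ.mono_set hS₂Λ)
  have hmono : ∫ x in S₁ ∪ S₂, g x ≤ ∫ x in Λ, g x :=
    setIntegral_mono_set hgΛ (ae_of_all _ hgnn)
      (HasSubset.Subset.eventuallyLE (union_subset hS₁Λ hS₂Λ))
  have hsplitg : ∫ x in Λ, g x
      = b * (∫ x in Λ, (fderiv ℝ v x n) ^ 2) + (∫ x in Λ, (v x) ^ 2) / b := by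
    rw [hgdef, integral_add (hDnint.const_mul b) (hv2Λ.div_const b),
      integral_const_mul, integral_div]
  have hgrad : (∫ x in Λ, (fderiv ℝ v x n) ^ 2)
      ≤ ∫ x in Λ, ((fderiv ℝ v x (1, 0)) ^ 2 + (fderiv ℝ v x (0, 1)) ^ 2) :=
    integral_mono hDnint hg2 fun x => hDn x
  have hv2nn : 0 ≤ ∫ x in Λ, (v x) ^ 2 := integral_nonneg fun x => sq_nonneg _
  have hDnn : 0 ≤ ∫ x in Λ, (fderiv ℝ v x n) ^ 2 := integral_nonneg fun x => sq_nonneg _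
  have hcoef : (2 / (1 - Real.cos θ)) / ε = s'⁻¹ * ((1:ℝ) / b) := by
    rw [hcos, hbdef]
    field_simp
    ring
  have hεb : s'⁻¹ * b = ε := by
    rw [hbdef]; field_simp
  calc (∫ r in Ioi (0:ℝ), (v (r, 0)) ^ 2)
      + (∫ r in Ioi (0:ℝ), (v (r * Real.cos θ, r * Real.sin θ)) ^ 2)
      = (∫ s in Ioi (0:ℝ), (v (1 * s, 0 * s)) ^ 2)
        + ∫ s in Ioi (0:ℝ), (v (Real.cos θ * s, Real.sin θ * s)) ^ 2 := by rw [hL1, hL2]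
    _ ≤ s'⁻¹ * (∫ x in S₁, g x) + s'⁻¹ * (∫ x in S₂, g x) := add_le_add ray1 ray2
    _ = s'⁻¹ * ∫ x in S₁ ∪ S₂, g x := by rw [hunion]; ring
    _ ≤ s'⁻¹ * ∫ x in Λ, g x :=
        mul_le_mul_of_nonneg_left hmono (inv_nonneg.2 hs'.le)
    _ = (s'⁻¹ * b) * (∫ x in Λ, (fderiv ℝ v x n) ^ 2)
        + (s'⁻¹ * ((1:ℝ)/b)) * (∫ x in Λ, (v x) ^ 2) := by rw [hsplitg]; ring
    _ ≤ ε * (∫ x in Λ, ((fderiv ℝ v x (1, 0)) ^ 2 + (fderiv ℝ v x (0, 1)) ^ 2))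
        + ((2 / (1 - Real.cos θ)) / ε) * ∫ x in Λ, (v x) ^ 2 := by
        rw [hεb, hcoef]
        exact add_le_add (mul_le_mul_of_nonneg_left hgrad hε.le) le_rfl
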